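/- arXiv:2108.05911 — 2 statements merged into one kernel-verified Lean document; each statement's English description precedes it below -/
import Mathlib

section
/- Let G' = (V, E) be a finite directed graph and let v_1, …, v_{n+1} be distinct vertices of G'. Assume that for every i ∈ {1, …, n}, every directed path in G' from v_1 to v_{i+1} passes through v_i. Then for every directed path σ in G' starting at v_1, the following are equivalent: (a) σ contains the vertex v_{n+1}; (b) σ contains every vertex v_1, v_2, …, v_{n+1}, and for every i ∈ {1, …, n}, no occurrence of v_{i+1} in σ precedes the first occurrence of v_i in σ (i.e., σ visits v_1, v_2, …, v_{n+1} in this order). -/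
/-- A directed path in the graph with edge set `E`: a nonempty list of vertices
whose consecutive pairs are edges. -/
def IsPath {V : Type*} (E : Set (V × V)) (p : List V) : Prop :=
  p ≠ [] ∧ List.Chain' (fun u w => (u, w) ∈ E) p

/-- A directed path from `s` to `t`. -/
def IsPathFromTo {V : Type*} (E : Set (V × V)) (p : List V) (s t : V) : Prop :=
  IsPath E p ∧ p.head? = some s ∧ p.getLast? = some t

/-- The list `p` visits `v 0, v 1, …, v n` in order: every `v i` occurs on `p`, and
no occurrence of `v (i+1)` precedes the first occurrence of `v i`. -/
def VisitsInOrder {V : Type*} [DecidableEq V] {n : ℕ} (v : Fin (n + 1) → V)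
    (p : List V) : Prop :=
  (∀ i, v i ∈ p) ∧
  ∀ (i : Fin n) (k : Fin p.length),
    p.get k = v i.succ → p.idxOf (v i.castSucc) < (k : ℕ)

lemma indexOf_lt_of_mem_take {V : Type*} [DecidableEq V] (x : V) :
    ∀ (l : List V) (m : ℕ), x ∈ l.take m → List.idxOf x l < m := by
  intro l
  induction l with
  | nil => intro m h; simp at h
  | cons a t ih =>
    intro m h
    cases m with
    | zero => simp at h
    | succ m =>
      simp only [List.take_succ_cons, List.mem_cons] at h
      by_cases hxa : x = a
      · subst hxa
        simp [List.idxOf_cons_self]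
      · have hx : x ∈ t.take m := by
          rcases h with h | h
          · exact absurd h hxa
          · exact h
        rw [List.idxOf_cons_ne _ (fun he => hxa he.symm)]
        exact Nat.succ_lt_succ (ih m hx)

/-- If every directed path from `v 0` to `v (i+1)` passes through `v i`
(for all `i`), then a directed path `σ` starting at `v 0` contains `v n` (the last
waypoint) iff it contains all the waypoints and visits them in order. -/
theorem reach_iff_sequence_visit {V : Type*} [Fintype V] [DecidableEq V]
    (E : Set (V × V)) (n : ℕ) (v : Fin (n + 1) → V) (hv : Function.Injective v)
    (hpass : ∀ i : Fin n, ∀ p : List V,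
      IsPathFromTo E p (v 0) (v i.succ) → v i.castSucc ∈ p)
    (σ : List V) (hσ : IsPath E σ) (hstart : σ.head? = some (v 0)) :
    v (Fin.last n) ∈ σ ↔ VisitsInOrder v σ := by
  have key : ∀ (i : Fin n) (k : Fin σ.length),
      σ.get k = v i.succ → List.idxOf (v i.castSucc) σ < (k : ℕ) := by
    intro i k hk
    set p := σ.take (k + 1) with hp
    have hlen : p.length = k + 1 := by
      rw [hp, List.length_take]
      exact Nat.min_eq_left k.isLt
    have hpath : IsPathFromTo E p (v 0) (v i.succ) := by
      refine ⟨⟨?_, hσ.2.prefix (List.take_prefix _ _)⟩, ?_, ?_⟩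
      · intro hnil
        rw [hnil] at hlen; simp at hlen
      · rw [List.head?_eq_getElem?, hp, List.getElem?_take,
          if_pos (Nat.succ_pos _), ← List.head?_eq_getElem?]
        exact hstart
      · rw [List.getLast?_eq_getElem?, hlen]
        simp only [Nat.add_sub_cancel, hp, List.getElem?_take,
          if_pos (Nat.lt_succ_self _)]
        rw [List.getElem?_eq_getElem k.isLt]
        rw [← List.get_eq_getElem, hk]
    have hmem : v i.castSucc ∈ p := hpass i p hpath
    have hlt : List.idxOf (v i.castSucc) σ < (k : ℕ) + 1 :=
      indexOf_lt_of_mem_take _ σ _ hmem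
    have hne : List.idxOf (v i.castSucc) σ ≠ (k : ℕ) := by
      intro he
      have hltlen : List.idxOf (v i.castSucc) σ < σ.length := he ▸ k.isLt
      have := List.idxOf_get hltlen
      rw [show (⟨List.idxOf (v i.castSucc) σ, hltlen⟩ : Fin σ.length) = k by
        ext; exact he] at this
      rw [hk] at this
      exact absurd (hv this) (Fin.ne_of_lt (Fin.castSucc_lt_succ (i := i))).symm
    omega
  constructor
  · intro hlast
    refine ⟨?_, fun i k h => key i k h⟩
    intro i
    induction i using Fin.reverseInduction with
    | last => exact hlast
    | cast i ih =>
      obtain ⟨k, hk⟩ := List.mem_iff_get.mp ih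
      exact List.idxOf_lt_length_iff.mp (lt_trans (key i k hk) k.isLt)
  · intro h
    exact h.1 _
end

section
/- Let G = (V, E) be a finite directed graph and let v_1, …, v_{n+1} be distinct vertices. Suppose G contains a directed path Γ from v_1 to v_{n+1} that visits each of its vertices at most once and visits v_1, v_2, …, v_{n+1} in this order. Then there exists a set of edges C ⊆ E such that in the graph G' = (V, E ∖ C), all distances d_{G'}(v_i, v_{n+1}) are finite and d_{G'}(v_1, v_{n+1}) > d_{G'}(v_2, v_{n+1}) > ⋯ > d_{G'}(v_n, v_{n+1}) > d_{G'}(v_{n+1}, v_{n+1}) = 0. -/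
/-- The distance from `u` to `w` in the graph with edge set `E`: the length of a
shortest directed path from `u` to `w` (`⊤` if none exists). A path `q_0 … q_k`
has length `k`, i.e. list length `k + 1`. -/
noncomputable def graphDist {V : Type*} (E : Set (V × V)) (u w : V) : ℕ∞ :=
  sInf {k : ℕ∞ | ∃ p : List V, IsPathFromTo E p u w ∧ (p.length : ℕ∞) = k + 1}

def pathEdges {V : Type*} (p : List V) : Set (V × V) :=
  {e | ∃ (j : ℕ) (h : j + 1 < p.length), e.1 = p[j] ∧ e.2 = p[j + 1]}

lemma indexOf_of_edge {V : Type*} [DecidableEq V] {p : List V} (hp : p.Nodup) {a b : V}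
    (h : (a, b) ∈ pathEdges p) :
    a ∈ p ∧ b ∈ p ∧ p.idxOf b = p.idxOf a + 1 ∧ p.idxOf b < p.length := by
  obtain ⟨j, hj, ha, hb⟩ := h
  simp only at ha hb
  subst ha; subst hb
  refine ⟨List.getElem_mem _, List.getElem_mem _, ?_, ?_⟩
  · rw [List.Nodup.idxOf_getElem hp, List.Nodup.idxOf_getElem hp]
  · rw [List.Nodup.idxOf_getElem hp]; exact hj

lemma indexOf_getLast_of_chain {V : Type*} [DecidableEq V] {p : List V} (hp : p.Nodup) :
    ∀ (q : List V), List.Chain' (fun a b => (a, b) ∈ pathEdges p) q → ∀ (hq : q ≠ []),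
      p.idxOf (q.getLast hq) + 1 = p.idxOf (q.head hq) + q.length
  | [], _, hq => absurd rfl hq
  | [u], _, _ => by simp
  | u :: b :: rest, hch, _ => by
    unfold List.Chain' at hch
    rw [List.isChain_cons_cons] at hch
    obtain ⟨he, hch⟩ := hch
    have ih := indexOf_getLast_of_chain hp (b :: rest) hch (by simp)
    have hub := (indexOf_of_edge hp he).2.2.1
    rw [List.getLast_cons (by simp)]
    simp only [List.head_cons, List.length_cons] at ih ⊢
    omega

lemma chain'_pathEdges {V : Type*} (p : List V) :
    List.Chain' (fun a b => (a, b) ∈ pathEdges p) p := by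
  unfold List.Chain'
  rw [List.isChain_iff_getElem]
  intro i h
  exact ⟨i, by omega, by simp [List.get_eq_getElem], by simp [List.get_eq_getElem]⟩

lemma graphDist_pathEdges {V : Type*} [DecidableEq V] {p : List V} (hp : p.Nodup)
    {u : V} (hu : u ∈ p) :
    graphDist (pathEdges p) u (p.getLast (List.ne_nil_of_mem hu)) =
      ((p.length - 1 - p.idxOf u : ℕ) : ℕ∞) := by
  have hnil : p ≠ [] := List.ne_nil_of_mem hu
  set L := p.length with hL
  set j := p.idxOf u with hjdef
  have hjL : j < L := List.idxOf_lt_length_iff.2 hu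
  have hiw : p.idxOf (p.getLast hnil) = L - 1 := by
    rw [List.getLast_eq_getElem, List.Nodup.idxOf_getElem hp]
  apply le_antisymm
  · -- upper bound: the suffix p.drop j is a path
    apply sInf_le
    refine ⟨p.drop j, ⟨⟨?_, ?_⟩, ?_, ?_⟩, ?_⟩
    · simp [hL]; omega
    · exact (chain'_pathEdges p).suffix (List.drop_suffix j p)
    · rw [List.head?_eq_head (by simp [hL]; omega), List.head_drop]
      rw [List.getElem_idxOf hjL]
    · rw [List.getLast?_eq_getLast_of_ne_nil (by simp [hL]; omega), List.getLast_drop]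
    · rw [List.length_drop]
      have : L - j = (L - 1 - j) + 1 := by omega
      rw [← hL, this]
      push_cast
      ring
  · -- lower bound
    apply le_sInf
    rintro k ⟨q, ⟨⟨hq0, hch⟩, hhd, hlast⟩, hlen⟩
    have hne : k ≠ ⊤ := by
      rintro rfl
      simp at hlen
    lift k to ℕ using hne
    have hqlen : q.length = k + 1 := by
      exact_mod_cast hlen
    have hhd' : q.head hq0 = u := by
      rw [List.head?_eq_head hq0] at hhd; exact Option.some_injective _ hhd
    have hlast' : q.getLast hq0 = p.getLast hnil := by
      rw [List.getLast?_eq_getLast_of_ne_nil hq0] at hlast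
      exact Option.some_injective _ hlast
    have key := indexOf_getLast_of_chain hp q hch hq0
    rw [hhd', hlast', hiw, ← hjdef] at key
    rw [Nat.cast_le]
    omega

/-- If `G` contains a vertex-simple directed path from `v 0` to
`v n` (i.e. `v_1` to `v_{n+1}`) visiting the distinct waypoints in order, then some
set of edges `C ⊆ E` can be removed so that in `G' = (V, E \ C)` the distances to the
final waypoint are finite and strictly decreasing along the waypoint sequence,
ending at distance `0`. -/
theorem exists_cut_strict_distance_chain {V : Type*} [Fintype V] [DecidableEq V]
    (E : Set (V × V)) (n : ℕ) (v : Fin (n + 1) → V) (hv : Function.Injective v)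
    (Γ : List V) (hΓ : IsPathFromTo E Γ (v 0) (v (Fin.last n)))
    (hnodup : Γ.Nodup) (horder : VisitsInOrder v Γ) :
    ∃ C : Set (V × V), C ⊆ E ∧
      (∀ i : Fin (n + 1), graphDist (E \ C) (v i) (v (Fin.last n)) ≠ ⊤) ∧
      (∀ i : Fin n,
        graphDist (E \ C) (v i.succ) (v (Fin.last n)) <
          graphDist (E \ C) (v i.castSucc) (v (Fin.last n))) ∧
      graphDist (E \ C) (v (Fin.last n)) (v (Fin.last n)) = 0 := by
  obtain ⟨⟨hΓne, hΓch⟩, hΓhd, hΓlast⟩ := hΓ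
  have hPE : pathEdges Γ ⊆ E := by
    rintro ⟨a, b⟩ ⟨j, hj, ha, hb⟩
    simp only at ha hb
    subst ha; subst hb
    have := List.isChain_iff_getElem.1 hΓch j (by omega)
    simpa [List.get_eq_getElem] using this
  refine ⟨E \ pathEdges Γ, Set.diff_subset, ?_⟩
  have hEC : E \ (E \ pathEdges Γ) = pathEdges Γ := by
    ext e
    constructor
    · rintro ⟨he, hne⟩
      by_contra h
      exact hne ⟨he, h⟩
    · intro h
      exact ⟨hPE h, fun hc => hc.2 h⟩
  rw [hEC]
  -- the last waypoint is the last vertex of Γ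
  have hwlast : ∀ h : Γ ≠ [], Γ.getLast h = v (Fin.last n) := by
    intro h
    rw [List.getLast?_eq_getLast_of_ne_nil h] at hΓlast
    exact Option.some_injective _ hΓlast
  have hmem : ∀ i, v i ∈ Γ := horder.1
  have hdist : ∀ i : Fin (n + 1),
      graphDist (pathEdges Γ) (v i) (v (Fin.last n)) =
        ((Γ.length - 1 - Γ.idxOf (v i) : ℕ) : ℕ∞) := by
    intro i
    rw [← hwlast (List.ne_nil_of_mem (hmem i))]
    exact graphDist_pathEdges hnodup (hmem i)
  have hidx : ∀ i : Fin n, Γ.idxOf (v i.castSucc) < Γ.idxOf (v i.succ) := by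
    intro i
    have hm := List.idxOf_lt_length_iff.2 (hmem i.succ)
    exact horder.2 i ⟨Γ.idxOf (v i.succ), hm⟩ (by simp [List.get_eq_getElem,
      List.getElem_idxOf hm])
  refine ⟨?_, ?_, ?_⟩
  · intro i
    rw [hdist i]
    simp
  · intro i
    rw [hdist i.castSucc, hdist i.succ, Nat.cast_lt]
    have h1 := hidx i
    have h2 := List.idxOf_lt_length_iff.2 (hmem i.succ)
    omega
  · rw [hdist (Fin.last n)]
    have h : Γ.idxOf (v (Fin.last n)) = Γ.length - 1 := by
      rw [← hwlast hΓne, List.getLast_eq_getElem, List.Nodup.idxOf_getElem hnodup]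
    rw [h]
    have : Γ.length - 1 - (Γ.length - 1) = 0 := by omega
    rw [this, Nat.cast_zero]
end
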